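/- For elementary cellular automaton Rule 7 on a ring of size n ≥ 2, the parallel fixed points are exactly the two alternating configurations (01)^{n/2} and (10)^{n/2}, which exist if and only if n is even. -/
import Mathlib


/-- Single-cell update: replace the state of cell `i` by the local rule applied
to its neighborhood on the ring `ZMod n`. -/
def eupdate (n : ℕ) (f : Bool → Bool → Bool → Bool) (x : ZMod n → Bool) (i : ZMod n) :
    ZMod n → Bool :=
  Function.update x i (f (x (i - 1)) (x i) (x (i + 1)))

/-- Synchronous (parallel) step. -/
def parStep (n : ℕ) (f : Bool → Bool → Bool → Bool) (x : ZMod n → Bool) : ZMod n → Bool :=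
  fun i => f (x (i - 1)) (x i) (x (i + 1))

/-- `x` is a fixed point of the parallel dynamics. -/
def IsFixedConfig (n : ℕ) (f : Bool → Bool → Bool → Bool) (x : ZMod n → Bool) : Prop :=
  ∀ i : ZMod n, f (x (i - 1)) (x i) (x (i + 1)) = x i

/-- One full sequential step under the sequential update mode `μ`
(a permutation of the cells): update cells one at a time in the order
`μ 0, μ 1, …, μ (n-1)`. -/
def seqStep (n : ℕ) (f : Bool → Bool → Bool → Bool) (μ : Fin n ≃ ZMod n)
    (x : ZMod n → Bool) : ZMod n → Bool :=
  (List.finRange n).foldl (fun y k => eupdate n f y (μ k)) x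

/-- One full sequential step under the descending order `(n-1, n-2, …, 0)`. -/
def seqStepDesc (n : ℕ) (f : Bool → Bool → Bool → Bool) (x : ZMod n → Bool) : ZMod n → Bool :=
  ((List.range n).reverse).foldl (fun y k => eupdate n f y (k : ZMod n)) x

/-- One full sequential step under the ascending order `(0, 1, …, n-1)`. -/
def seqStepAsc (n : ℕ) (f : Bool → Bool → Bool → Bool) (x : ZMod n → Bool) : ZMod n → Bool :=
  (List.range n).foldl (fun y k => eupdate n f y (k : ZMod n)) x

def rule7 : Bool → Bool → Bool → Bool
  | true, true, true => false
  | true, true, false => false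
  | true, false, true => false
  | true, false, false => false
  | false, true, true => false
  | false, true, false => true
  | false, false, true => true
  | false, false, false => true


lemma rule7_eq (a b c : Bool) : rule7 a b c = (!a && !(b && c)) := by
  cases a <;> cases b <;> cases c <;> rfl

lemma fixed_iff_alt (n : ℕ) (x : ZMod n → Bool) :
    IsFixedConfig n rule7 x ↔ ∀ i : ZMod n, x (i + 1) = !x i := by
  constructor
  · intro h i
    have h1 := h i
    have h2 := h (i + 1)
    rw [add_sub_cancel_right] at h2
    rw [rule7_eq] at h1 h2
    cases hb : x i <;> cases hc : x (i + 1) <;> simp_all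
  · intro h i
    have h1 : x (i - 1) = !x i := by
      have := h (i - 1)
      rw [sub_add_cancel] at this
      rw [this]; simp
    have h2 := h i
    rw [rule7_eq, h2, h1]
    cases x i <;> rfl

lemma alt_pow (n : ℕ) (x : ZMod n → Bool) (h : ∀ i : ZMod n, x (i + 1) = !x i) :
    ∀ k : ℕ, x (k : ZMod n) = xor (x 0) (decide (k % 2 = 1)) := by
  intro k
  induction k with
  | zero => simp
  | succ k ih =>
    have e : ((k + 1 : ℕ) : ZMod n) = (k : ZMod n) + 1 := by push_cast; ring
    rw [e, h, ih]
    rcases Nat.mod_two_eq_zero_or_one k with hk | hk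
    · have h2 : (k + 1) % 2 = 1 := by omega
      simp [hk, h2]
    · have h2 : (k + 1) % 2 = 0 := by omega
      simp [hk, h2]

lemma val_succ_mod_two (n : ℕ) [NeZero n] (hn2 : 2 ≤ n) (hne : n % 2 = 0) (i : ZMod n) :
    (i + 1).val % 2 = (i.val + 1) % 2 := by
  haveI : Fact (1 < n) := ⟨by omega⟩
  have hv : (i + 1).val = (i.val + 1) % n := by
    rw [ZMod.val_add, ZMod.val_one]
  have hlt : i.val < n := ZMod.val_lt i
  rw [hv]
  rcases Nat.lt_or_ge (i.val + 1) n with hl | hg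
  · rw [Nat.mod_eq_of_lt hl]
  · have he : i.val + 1 = n := by omega
    rw [he, Nat.mod_self]
    omega

theorem rule7_fixed_points (n : ℕ) (hn : 2 ≤ n) (x : ZMod n → Bool) :
    IsFixedConfig n rule7 x ↔
      (Even n ∧ ((∀ i : ZMod n, x i = decide (i.val % 2 = 0)) ∨
                 (∀ i : ZMod n, x i = decide (i.val % 2 = 1)))) := by
  haveI : NeZero n := ⟨by omega⟩
  constructor
  · intro h
    have alt := (fixed_iff_alt n x).mp h
    have key := alt_pow n x alt
    have hn0 : x ((n : ℕ) : ZMod n) = x 0 := by simp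
    have hne : n % 2 = 0 := by
      by_contra hodd
      have h1 : n % 2 = 1 := by omega
      have := key n
      rw [hn0, h1] at this
      simp at this
    refine ⟨Nat.even_iff.mpr hne, ?_⟩
    have hx : ∀ i : ZMod n, x i = xor (x 0) (decide (i.val % 2 = 1)) := by
      intro i
      have : ((i.val : ℕ) : ZMod n) = i := by rw [ZMod.natCast_val, ZMod.cast_id]
      conv_lhs => rw [← this]
      rw [key]
    cases h0 : x 0 with
    | true =>
      left
      intro i
      rw [hx i, h0]
      rcases Nat.mod_two_eq_zero_or_one i.val with h2 | h2 <;>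
        simp [h2]
    | false =>
      right
      intro i
      rw [hx i, h0]
      simp
  · rintro ⟨hev, hp | hp⟩ <;>
    · have hne : n % 2 = 0 := Nat.even_iff.mp hev
      apply (fixed_iff_alt n x).mpr
      intro i
      rw [hp, hp, val_succ_mod_two n hn hne]
      have h2 : i.val % 2 = 0 ∨ i.val % 2 = 1 := Nat.mod_two_eq_zero_or_one _
      rcases h2 with h2 | h2
      · have h3 : (i.val + 1) % 2 = 1 := by omega
        simp [h2, h3]
      · have h3 : (i.val + 1) % 2 = 0 := by omega
        simp [h2, h3]
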